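/- Let X, X̃, X̃' be random vectors in ℝ^p and y a real random variable satisfying: (i) y = m(X) + ε with ε independent of (X, X̃, X̃'), E[ε] = 0 and E[ε²] < ∞; (ii) X̃ has the same distribution as X; (iii) m(X̃) = m(X) almost surely (the conditional null at coordinate j, where X̃ is the theoretical conditional resample, X̃' the empirical one); (iv) m(X), m̂(X), m̂(X̃), m̂(X̃') are square-integrable. Then the expected CPI satisfies E[(y − m̂(X̃'))²] − E[(y − m̂(X))²] = E[(m̂(X̃) − m̂(X̃'))²] + 2 E[(m(X̃) − m̂(X̃))(m̂(X̃) − m̂(X̃'))]. In particular, the bias of CPI under the conditional null vanishes whenever either m̂ is close to m or X̃' is close to X̃ (double robustness). -/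

import Mathlib

open MeasureTheory ProbabilityTheory

noncomputable section

/-- double robustness of the CPI bias, quadratic loss: under the additive
noise model `y = m(X) + ε` with `ε` independent of `(X, X̃, X̃')` and centered, `X̃ ∼ X`,
`m(X̃) = m(X)` a.s. (the conditional null), and square-integrability, the expected CPI equals
`E[(m̂(X̃) - m̂(X̃'))²] + 2 E[(m(X̃) - m̂(X̃)) (m̂(X̃) - m̂(X̃'))]`. -/
theorem cpi_bias_decomposition
    {Ω : Type*} [MeasurableSpace Ω] (P : Measure Ω) [IsProbabilityMeasure P]
    {p : ℕ} (X Xt Xt' : Ω → Fin p → ℝ) (y ε : Ω → ℝ)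
    (hX : Measurable X) (hXt : Measurable Xt) (hXt' : Measurable Xt')
    (m mhat : (Fin p → ℝ) → ℝ) (hm : Measurable m) (hmhat : Measurable mhat)
    (hy : ∀ ω, y ω = m (X ω) + ε ω)
    (hεindep : IndepFun ε (fun ω => (X ω, Xt ω, Xt' ω)) P)
    (hε0 : (∫ ω, ε ω ∂P) = 0) (hε2 : MemLp ε 2 P)
    (hXtX : IdentDistrib Xt X P P)
    (hnull : (fun ω => m (Xt ω)) =ᵐ[P] fun ω => m (X ω))
    (h1 : MemLp (fun ω => m (X ω)) 2 P)
    (h2 : MemLp (fun ω => mhat (X ω)) 2 P)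
    (h3 : MemLp (fun ω => mhat (Xt ω)) 2 P)
    (h4 : MemLp (fun ω => mhat (Xt' ω)) 2 P) :
    (∫ ω, (y ω - mhat (Xt' ω)) ^ 2 ∂P) - (∫ ω, (y ω - mhat (X ω)) ^ 2 ∂P)
      = (∫ ω, (mhat (Xt ω) - mhat (Xt' ω)) ^ 2 ∂P)
        + 2 * ∫ ω, (m (Xt ω) - mhat (Xt ω)) * (mhat (Xt ω) - mhat (Xt' ω)) ∂P := by
  -- basic integrability facts
  have mulInt : ∀ {f g : Ω → ℝ}, MemLp f 2 P → MemLp g 2 P →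
      Integrable (fun ω => f ω * g ω) P := by
    intro f g hf hg
    have h := (((hf.add hg).integrable_sq.sub hf.integrable_sq).sub
      hg.integrable_sq).div_const 2
    refine h.congr (Filter.Eventually.of_forall fun ω => ?_)
    simp only [Pi.sub_apply, Pi.add_apply]
    ring
  -- vanishing of cross terms with the noise
  have cross : ∀ f : (Fin p → ℝ) × (Fin p → ℝ) × (Fin p → ℝ) → ℝ, Measurable f →
      ∫ ω, ε ω * f (X ω, Xt ω, Xt' ω) ∂P = 0 := by
    intro f hf
    have hind : IndepFun ε (fun ω => f (X ω, Xt ω, Xt' ω)) P :=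
      hεindep.comp measurable_id hf
    rw [hind.integral_fun_mul_eq_mul_integral hε2.aestronglyMeasurable
      ((hf.comp (hX.prodMk (hXt.prodMk hXt'))).aestronglyMeasurable), hε0, zero_mul]
  have crossd : ∫ ω, ε ω * (m (X ω) - mhat (Xt' ω)) ∂P = 0 :=
    cross (fun z => m z.1 - mhat z.2.2)
      ((hm.comp measurable_fst).sub (hmhat.comp (measurable_snd.comp measurable_snd)))
  have crossb : ∫ ω, ε ω * (m (X ω) - mhat (X ω)) ∂P = 0 :=
    cross (fun z => m z.1 - mhat z.1)
      ((hm.comp measurable_fst).sub (hmhat.comp measurable_fst))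
  -- expansion of the two loss terms
  have expand : ∀ (g : Ω → ℝ), MemLp g 2 P →
      (∫ ω, ε ω * (m (X ω) - g ω) ∂P) = 0 →
      ∫ ω, (y ω - g ω) ^ 2 ∂P
        = (∫ ω, (m (X ω) - g ω) ^ 2 ∂P) + ∫ ω, ε ω ^ 2 ∂P := by
    intro g hg hcr
    have hag : MemLp (fun ω => m (X ω) - g ω) 2 P := h1.sub hg
    have key : (fun ω => (y ω - g ω) ^ 2)
        = fun ω => (m (X ω) - g ω) ^ 2 + (2 * (ε ω * (m (X ω) - g ω)) + ε ω ^ 2) := by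
      funext ω; rw [hy ω]; ring
    have hB : Integrable (fun ω => 2 * (ε ω * (m (X ω) - g ω)) + ε ω ^ 2) P :=
      ((mulInt hε2 hag).const_mul 2).add hε2.integrable_sq
    have hC : Integrable (fun ω => 2 * (ε ω * (m (X ω) - g ω))) P :=
      (mulInt hε2 hag).const_mul 2
    rw [key, integral_add hag.integrable_sq hB, integral_add hC hε2.integrable_sq,
      integral_const_mul, hcr, mul_zero, zero_add]
  have e1 := expand _ h4 crossd
  have e2 := expand _ h2 crossb
  -- rewrite the right-hand side cross term using the conditional null
  have hac : ∫ ω, (m (Xt ω) - mhat (Xt ω)) * (mhat (Xt ω) - mhat (Xt' ω)) ∂P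
      = ∫ ω, (m (X ω) - mhat (Xt ω)) * (mhat (Xt ω) - mhat (Xt' ω)) ∂P := by
    refine integral_congr_ae ?_
    filter_upwards [hnull] with ω h
    rw [h]
  -- algebraic recombination of the right-hand side
  have hacm : MemLp (fun ω => m (X ω) - mhat (Xt ω)) 2 P := h1.sub h3
  have hcdm : MemLp (fun ω => mhat (Xt ω) - mhat (Xt' ω)) 2 P := h3.sub h4
  have hadm : MemLp (fun ω => m (X ω) - mhat (Xt' ω)) 2 P := h1.sub h4
  have e3 : (∫ ω, (mhat (Xt ω) - mhat (Xt' ω)) ^ 2 ∂P)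
        + 2 * ∫ ω, (m (X ω) - mhat (Xt ω)) * (mhat (Xt ω) - mhat (Xt' ω)) ∂P
      = (∫ ω, (m (X ω) - mhat (Xt' ω)) ^ 2 ∂P)
        - ∫ ω, (m (X ω) - mhat (Xt ω)) ^ 2 ∂P := by
    have hC : Integrable (fun ω => 2 * ((m (X ω) - mhat (Xt ω)) * (mhat (Xt ω) - mhat (Xt' ω)))) P :=
      (mulInt hacm hcdm).const_mul 2
    rw [← integral_const_mul, ← integral_add hcdm.integrable_sq hC,
      ← integral_sub hadm.integrable_sq hacm.integrable_sq]
    refine integral_congr_ae (Filter.Eventually.of_forall fun ω => ?_)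
    ring
  -- identify ∫ (m(X) - m̂(X̃))² with ∫ (m(X) - m̂(X))² via the null and equidistribution
  have e4 : ∫ ω, (m (X ω) - mhat (Xt ω)) ^ 2 ∂P
      = ∫ ω, (m (X ω) - mhat (X ω)) ^ 2 ∂P := by
    have h5 : ∫ ω, (m (X ω) - mhat (Xt ω)) ^ 2 ∂P
        = ∫ ω, (m (Xt ω) - mhat (Xt ω)) ^ 2 ∂P := by
      refine integral_congr_ae ?_
      filter_upwards [hnull] with ω h
      rw [h]
    have h6 : IdentDistrib (fun ω => (m (Xt ω) - mhat (Xt ω)) ^ 2)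
        (fun ω => (m (X ω) - mhat (X ω)) ^ 2) P P :=
      hXtX.comp ((hm.sub hmhat).pow_const 2)
    rw [h5, h6.integral_eq]
  rw [e1, e2, hac, e3, e4]
  ring

end
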